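/- Let r, k, s be integers with k + r ≠ 0 and k + s ≠ 0, and let n be a non-negative integer. Then 2·Σ_{j=0}^{n} (−1)^{(k+s)j} L_{r−s}^j L_{2k+r+s}^{n−j} = Σ_{j=0}^{n} (L_{k+r} L_{k+s}/2)^j (L_{2k+r+s}^{n−j} + (−1)^{(k+s)(n−j)} L_{r−s}^{n−j}) = 2·(L_{2k+r+s}^{n+1} − (−1)^{(k+s)(n+1)} L_{r−s}^{n+1}) / (5·F_{k+r}·F_{k+s}). -/

import Mathlib

open Finset

/-- Integer-indexed Fibonacci numbers: `fibZ n = F n`, with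
`F (-n) = (-1)^(n+1) * F n`. -/
def fibZ (n : ℤ) : ℤ :=
  if 0 ≤ n then (Nat.fib n.toNat : ℤ) else (-1) ^ (n.natAbs + 1) * (Nat.fib n.natAbs : ℤ)

/-- Integer-indexed Lucas numbers: `lucZ n = L n = F (n+1) + F (n-1)`. -/
def lucZ (n : ℤ) : ℤ := fibZ (n + 1) + fibZ (n - 1)

/-- `Esign p = (-1)^p`. -/
def Esign (p : ℤ) : ℤ := if Even p then 1 else -1

lemma E_sq (p : ℤ) : Esign p * Esign p = 1 := by
  unfold Esign; by_cases h : Even p <;> simp [h]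

lemma E_add (u v : ℤ) : Esign (u + v) = Esign u * Esign v := by
  unfold Esign
  by_cases hu : Even u <;> by_cases hv : Even v <;>
    simp [hu, hv, Int.even_add]

lemma E_add_one (p : ℤ) : Esign (p + 1) = - Esign p := by
  unfold Esign
  by_cases h : Even p <;> simp [h, Int.even_add_one]

lemma E_neg (p : ℤ) : Esign (-p) = Esign p := by
  unfold Esign; simp

lemma E_cast (t : ℤ) : ((-1 : ℚ) ^ t) = (Esign t : ℚ) := by
  unfold Esign
  rcases Int.even_or_odd t with h | h
  · rw [h.neg_one_zpow]; simp [h]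
  · rw [h.neg_one_zpow]; simp [Int.not_even_iff_odd.2 h]

lemma E_mul_nat (x : ℤ) (j : ℕ) : Esign (x * j) = (Esign x) ^ j := by
  induction j with
  | zero => simp [Esign]
  | succ j ih =>
      have : x * ((j : ℤ) + 1) = x * j + x := by ring
      push_cast
      rw [this, E_add, ih, pow_succ]

lemma E_pow_natAbs (n : ℤ) : ((-1 : ℤ)) ^ n.natAbs = Esign n := by
  unfold Esign
  by_cases h : Even n
  · rw [Even.neg_one_pow (Int.natAbs_even.2 h), if_pos h]
  · rw [Odd.neg_one_pow (Int.natAbs_odd.2 (Int.not_even_iff_odd.1 h)), if_neg h]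

lemma fibZ_add_two (n : ℤ) : fibZ (n + 2) = fibZ (n + 1) + fibZ n := by
  rcases le_or_gt 0 n with h | h
  · unfold fibZ
    rw [if_pos (by omega), if_pos (by omega), if_pos h]
    have h2 : (n + 2).toNat = n.toNat + 2 := by omega
    have h1 : (n + 1).toNat = n.toNat + 1 := by omega
    rw [h2, h1, Nat.fib_add_two]
    push_cast; ring
  · rcases eq_or_lt_of_le (by omega : n ≤ -1) with h1 | h1
    · subst_eqs; decide
    · rcases eq_or_lt_of_le (by omega : n ≤ -2) with h2 | h2
      · subst_eqs; decide
      · unfold fibZ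
        rw [if_neg (by omega), if_neg (by omega), if_neg (by omega)]
        have e2 : (n + 2).natAbs = n.natAbs - 2 := by omega
        have e1 : (n + 1).natAbs = n.natAbs - 1 := by omega
        obtain ⟨m, hm'⟩ : ∃ m, n.natAbs = m + 3 := ⟨n.natAbs - 3, by omega⟩
        rw [e2, e1, hm']
        rw [show m + 3 - 2 = m + 1 from by omega]
        rw [show m + 3 - 1 = m + 2 from by omega]
        rw [show m + 3 = (m + 1) + 2 from by omega, Nat.fib_add_two (n := m + 1)]
        push_cast
        ring

lemma fibZ_neg (n : ℤ) : fibZ (-n) = - Esign n * fibZ n := by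
  rcases lt_trichotomy n 0 with h | h | h
  · unfold fibZ
    rw [if_pos (by omega), if_neg (by omega)]
    have : (-n).toNat = n.natAbs := by omega
    rw [this, pow_succ, E_pow_natAbs]
    by_cases he : Even n <;> simp [Esign, he]
  · subst h; decide
  · unfold fibZ
    rw [if_neg (by omega), if_pos (by omega)]
    have h1 : (-n).natAbs = n.toNat := by omega
    have h2 : n.natAbs = n.toNat := by omega
    rw [h1, ← h2, pow_succ, E_pow_natAbs]
    ring

lemma lucZ_add_two (n : ℤ) : lucZ (n + 2) = lucZ (n + 1) + lucZ n := by
  unfold lucZ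
  have h1 := fibZ_add_two (n + 1)
  have h2 := fibZ_add_two (n - 1)
  rw [show n + 1 + 2 = n + 2 + 1 from by ring] at h1
  rw [show n - 1 + 2 = n + 2 - 1 from by ring, show n - 1 + 1 = n + 1 - 1 from by ring] at h2
  rw [h1, h2]
  ring

lemma lucZ_neg (n : ℤ) : lucZ (-n) = Esign n * lucZ n := by
  unfold lucZ
  have h1 : -n + 1 = -(n - 1) := by ring
  have h2 : -n - 1 = -(n + 1) := by ring
  rw [h1, h2, fibZ_neg, fibZ_neg, show n - 1 = n + -1 from by ring, E_add,
    E_add_one, show Esign (-1) = -1 from by decide]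
  ring

lemma fib_like (f g : ℤ → ℤ) (hf : ∀ n, f (n + 2) = f (n + 1) + f n)
    (hg : ∀ n, g (n + 2) = g (n + 1) + g n) (h0 : f 0 = g 0) (h1 : f 1 = g 1) :
    ∀ n, f n = g n := by
  have key : ∀ n : ℤ, f n = g n ∧ f (n + 1) = g (n + 1) := by
    intro n
    induction n using Int.induction_on with
    | zero => exact ⟨h0, by simpa using h1⟩
    | succ i ih =>
        refine ⟨ih.2, ?_⟩
        have hfi := hf i; have hgi := hg i
        rw [show (i : ℤ) + 1 + 1 = i + 2 from by ring]
        omega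
    | pred i ih =>
        have hfi := hf (-(i:ℤ) - 1); have hgi := hg (-(i:ℤ) - 1)
        rw [show -(i:ℤ) - 1 + 2 = -i + 1 from by ring,
          show -(i:ℤ) - 1 + 1 = -i from by ring] at hfi hgi
        refine ⟨by omega, ?_⟩
        rw [show -(i:ℤ) - 1 + 1 = -i from by ring]
        exact ih.1
  exact fun n => (key n).1

lemma fibZ_zero : fibZ 0 = 0 := by decide
lemma fibZ_one : fibZ 1 = 1 := by decide
lemma lucZ_zero : lucZ 0 = 2 := by decide
lemma lucZ_one : lucZ 1 = 1 := by decide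

lemma lucZ_rec' (p : ℤ) : lucZ (p + 1) = lucZ p + lucZ (p - 1) := by
  have := lucZ_add_two (p - 1)
  rw [show p - 1 + 2 = p + 1 from by ring, show p - 1 + 1 = p from by ring] at this
  exact this

lemma five_fib (p : ℤ) : lucZ (p + 1) + lucZ (p - 1) = 5 * fibZ p := by
  refine fib_like (fun p => lucZ (p + 1) + lucZ (p - 1)) (fun p => 5 * fibZ p)
    (fun n => ?_) (fun n => ?_) (by decide) (by decide) p
  · show lucZ (n + 2 + 1) + lucZ (n + 2 - 1)
      = (lucZ (n + 1 + 1) + lucZ (n + 1 - 1)) + (lucZ (n + 1) + lucZ (n - 1))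
    have h1 := lucZ_add_two (n + 1)
    have h2 := lucZ_add_two (n - 1)
    rw [show n + 1 + 2 = n + 2 + 1 from by ring] at h1
    rw [show n - 1 + 2 = n + 2 - 1 from by ring, show n - 1 + 1 = n + 1 - 1 from by ring] at h2
    rw [h1, h2]; ring
  · show 5 * fibZ (n + 2) = 5 * fibZ (n + 1) + 5 * fibZ n
    rw [fibZ_add_two]; ring

lemma L_plus (m p : ℤ) : lucZ (m + p) + Esign p * lucZ (m - p) = lucZ m * lucZ p := by
  refine fib_like (fun m => lucZ (m + p) + Esign p * lucZ (m - p))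
    (fun m => lucZ m * lucZ p) (fun n => ?_) (fun n => ?_) ?_ ?_ m
  · show lucZ (n + 2 + p) + Esign p * lucZ (n + 2 - p)
      = (lucZ (n + 1 + p) + Esign p * lucZ (n + 1 - p)) + (lucZ (n + p) + Esign p * lucZ (n - p))
    have h1 := lucZ_add_two (n + p)
    have h2 := lucZ_add_two (n - p)
    rw [show n + p + 2 = n + 2 + p from by ring, show n + p + 1 = n + 1 + p from by ring] at h1
    rw [show n - p + 2 = n + 2 - p from by ring, show n - p + 1 = n + 1 - p from by ring] at h2
    rw [h1, h2]; ring
  · show lucZ (n + 2) * lucZ p = lucZ (n + 1) * lucZ p + lucZ n * lucZ p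
    rw [lucZ_add_two]; ring
  · show lucZ (0 + p) + Esign p * lucZ (0 - p) = lucZ 0 * lucZ p
    rw [zero_add, lucZ_zero, show (0 : ℤ) - p = -p from by ring, lucZ_neg, ← mul_assoc, E_sq]
    ring
  · show lucZ (1 + p) + Esign p * lucZ (1 - p) = lucZ 1 * lucZ p
    rw [lucZ_one, one_mul, show (1 : ℤ) - p = -(p - 1) from by ring, lucZ_neg,
      show (1 : ℤ) + p = p + 1 from by ring, lucZ_rec']
    have hE : Esign p = - Esign (p - 1) := by
      have := E_add_one (p - 1)
      rw [show p - 1 + 1 = p from by ring] at this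
      exact this
    rw [hE]
    linear_combination (-(lucZ (p - 1))) * E_sq (p - 1)

lemma L_minus (m p : ℤ) : lucZ (m + p) - Esign p * lucZ (m - p) = 5 * fibZ m * fibZ p := by
  refine fib_like (fun m => lucZ (m + p) - Esign p * lucZ (m - p))
    (fun m => 5 * fibZ m * fibZ p) (fun n => ?_) (fun n => ?_) ?_ ?_ m
  · show lucZ (n + 2 + p) - Esign p * lucZ (n + 2 - p)
      = (lucZ (n + 1 + p) - Esign p * lucZ (n + 1 - p)) + (lucZ (n + p) - Esign p * lucZ (n - p))
    have h1 := lucZ_add_two (n + p)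
    have h2 := lucZ_add_two (n - p)
    rw [show n + p + 2 = n + 2 + p from by ring, show n + p + 1 = n + 1 + p from by ring] at h1
    rw [show n - p + 2 = n + 2 - p from by ring, show n - p + 1 = n + 1 - p from by ring] at h2
    rw [h1, h2]; ring
  · show 5 * fibZ (n + 2) * fibZ p = 5 * fibZ (n + 1) * fibZ p + 5 * fibZ n * fibZ p
    rw [fibZ_add_two]; ring
  · show lucZ (0 + p) - Esign p * lucZ (0 - p) = 5 * fibZ 0 * fibZ p
    rw [zero_add, fibZ_zero, show (0 : ℤ) - p = -p from by ring, lucZ_neg, ← mul_assoc, E_sq]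
    ring
  · show lucZ (1 + p) - Esign p * lucZ (1 - p) = 5 * fibZ 1 * fibZ p
    rw [fibZ_one, show (1 : ℤ) - p = -(p - 1) from by ring, lucZ_neg,
      show (1 : ℤ) + p = p + 1 from by ring]
    have hE : Esign p = - Esign (p - 1) := by
      have := E_add_one (p - 1)
      rw [show p - 1 + 1 = p from by ring] at this
      exact this
    rw [hE]
    linear_combination five_fib p + (lucZ (p - 1)) * E_sq (p - 1)

lemma fibZ_ne_zero {m : ℤ} (h : m ≠ 0) : fibZ m ≠ 0 := by
  unfold fibZ
  by_cases h0 : 0 ≤ m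
  · rw [if_pos h0]
    have : 0 < m.toNat := by omega
    have := Nat.fib_pos.2 this
    positivity
  · rw [if_neg h0]
    have : 0 < m.natAbs := by omega
    have hf := Nat.fib_pos.2 this
    intro hc
    rcases mul_eq_zero.1 hc with hc | hc
    · exact pow_ne_zero _ (by norm_num : (-1 : ℤ) ≠ 0) hc
    · exact absurd hc (by positivity)

lemma two_sum_eq (a b : ℚ) (n : ℕ) :
    2 * ∑ j ∈ range (n + 1), b ^ j * a ^ (n - j)
      = ∑ j ∈ range (n + 1), ((a + b) / 2) ^ j * (a ^ (n - j) + b ^ (n - j)) := by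
  induction n with
  | zero => norm_num
  | succ n ih =>
      have geom : (∑ j ∈ range (n + 1), b ^ j * a ^ (n - j)) * (b - a)
          = b ^ (n + 1) - a ^ (n + 1) := by
        have h := geom_sum₂_mul b a (n + 1)
        simpa using h
      rw [Finset.sum_range_succ' (fun j => b ^ j * a ^ (n + 1 - j)) (n + 1),
        Finset.sum_range_succ'
          (fun j => ((a + b) / 2) ^ j * (a ^ (n + 1 - j) + b ^ (n + 1 - j))) (n + 1)]
      have e1 : ∑ j ∈ range (n + 1), b ^ (j + 1) * a ^ (n + 1 - (j + 1))
          = b * ∑ j ∈ range (n + 1), b ^ j * a ^ (n - j) := by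
        rw [Finset.mul_sum]
        exact Finset.sum_congr rfl (fun j _ => by rw [Nat.succ_sub_succ]; ring)
      have e2 : ∑ j ∈ range (n + 1),
            ((a + b) / 2) ^ (j + 1) * (a ^ (n + 1 - (j + 1)) + b ^ (n + 1 - (j + 1)))
          = ((a + b) / 2) * ∑ j ∈ range (n + 1),
              ((a + b) / 2) ^ j * (a ^ (n - j) + b ^ (n - j)) := by
        rw [Finset.mul_sum]
        exact Finset.sum_congr rfl (fun j _ => by rw [Nat.succ_sub_succ]; ring)
      rw [e1, e2]
      simp only [pow_zero, one_mul, Nat.sub_zero]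
      linear_combination ((a + b) / 2) * ih + geom

theorem thm8_sums (r k s : ℤ) (hkr : k + r ≠ 0) (hks : k + s ≠ 0) (n : ℕ) :
    (2 * ∑ j ∈ Finset.range (n + 1),
        (-1 : ℚ) ^ ((k + s) * (j : ℤ)) * (lucZ (r - s) : ℚ) ^ j
          * (lucZ (2 * k + r + s) : ℚ) ^ (n - j)
      = ∑ j ∈ Finset.range (n + 1),
        ((lucZ (k + r) : ℚ) * (lucZ (k + s) : ℚ) / 2) ^ j
          * ((lucZ (2 * k + r + s) : ℚ) ^ (n - j)
            + (-1 : ℚ) ^ ((k + s) * ((n : ℤ) - j)) * (lucZ (r - s) : ℚ) ^ (n - j))) ∧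
    (2 * ∑ j ∈ Finset.range (n + 1),
        (-1 : ℚ) ^ ((k + s) * (j : ℤ)) * (lucZ (r - s) : ℚ) ^ j
          * (lucZ (2 * k + r + s) : ℚ) ^ (n - j)
      = 2 * ((lucZ (2 * k + r + s) : ℚ) ^ (n + 1)
          - (-1 : ℚ) ^ ((k + s) * ((n : ℤ) + 1)) * (lucZ (r - s) : ℚ) ^ (n + 1))
        / (5 * (fibZ (k + r) : ℚ) * (fibZ (k + s) : ℚ))) := by
  set A : ℚ := (lucZ (2 * k + r + s) : ℚ) with hA
  set L : ℚ := (lucZ (r - s) : ℚ) with hL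
  set e : ℚ := (Esign (k + s) : ℚ) with he
  set b : ℚ := e * L with hb
  -- sum/product identities for Lucas
  have hadd : A + b = (lucZ (k + r) : ℚ) * (lucZ (k + s) : ℚ) := by
    have h := L_plus (k + r) (k + s)
    rw [show (k + r) + (k + s) = 2 * k + r + s from by ring,
      show (k + r) - (k + s) = r - s from by ring] at h
    rw [hb, he, hL, hA]
    exact_mod_cast h
  have hsub : A - b = 5 * (fibZ (k + r) : ℚ) * (fibZ (k + s) : ℚ) := by
    have h := L_minus (k + r) (k + s)
    rw [show (k + r) + (k + s) = 2 * k + r + s from by ring,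
      show (k + r) - (k + s) = r - s from by ring] at h
    rw [hb, he, hL, hA]
    exact_mod_cast h
  have hden : (5 : ℚ) * (fibZ (k + r) : ℚ) * (fibZ (k + s) : ℚ) ≠ 0 := by
    have h1 : (fibZ (k + r) : ℚ) ≠ 0 := by exact_mod_cast fibZ_ne_zero hkr
    have h2 : (fibZ (k + s) : ℚ) ≠ 0 := by exact_mod_cast fibZ_ne_zero hks
    positivity
  -- rewrite the first sum
  have S1 : (∑ j ∈ Finset.range (n + 1),
      (-1 : ℚ) ^ ((k + s) * (j : ℤ)) * L ^ j * A ^ (n - j))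
      = ∑ j ∈ Finset.range (n + 1), b ^ j * A ^ (n - j) := by
    refine Finset.sum_congr rfl fun j _ => ?_
    rw [E_cast, E_mul_nat, hb]
    push_cast
    ring
  -- rewrite the middle sum
  have S2 : (∑ j ∈ Finset.range (n + 1),
      ((lucZ (k + r) : ℚ) * (lucZ (k + s) : ℚ) / 2) ^ j
        * (A ^ (n - j) + (-1 : ℚ) ^ ((k + s) * ((n : ℤ) - j)) * L ^ (n - j)))
      = ∑ j ∈ Finset.range (n + 1), ((A + b) / 2) ^ j * (A ^ (n - j) + b ^ (n - j)) := by
    refine Finset.sum_congr rfl fun j hj => ?_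
    have hj' : j ≤ n := by
      have := Finset.mem_range.1 hj; omega
    have hcast : (k + s) * ((n : ℤ) - j) = (k + s) * ((n - j : ℕ) : ℤ) := by
      have : ((n - j : ℕ) : ℤ) = (n : ℤ) - j := by
        push_cast [hj']; ring
      rw [this]
    rw [hcast, E_cast, E_mul_nat, ← hadd, hb]
    push_cast
    ring
  rw [S1, S2]
  refine ⟨two_sum_eq A b n, ?_⟩
  -- second part
  have hpow : (-1 : ℚ) ^ ((k + s) * ((n : ℤ) + 1)) * L ^ (n + 1) = b ^ (n + 1) := by
    rw [show (n : ℤ) + 1 = ((n + 1 : ℕ) : ℤ) from by push_cast; ring,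
      E_cast, E_mul_nat, hb]
    push_cast
    ring
  rw [hpow]
  have geom : (∑ j ∈ Finset.range (n + 1), b ^ j * A ^ (n - j)) * (b - A)
      = b ^ (n + 1) - A ^ (n + 1) := by
    have h := geom_sum₂_mul b A (n + 1)
    simpa using h
  rw [eq_div_iff hden]
  set S : ℚ := ∑ j ∈ Finset.range (n + 1), b ^ j * A ^ (n - j) with hS
  linear_combination (-2 * S) * hsub - 2 * geom
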